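/- Claim (classification of the method ERKN3): The ERKN coefficients c₁ = 1/2, b̄₁(hΩ) = (1/2)sinc²(hΩ/2), b₁(hΩ) = sinc(hΩ/2)cos(hΩ/2) satisfy all three symmetry conditions; explicitly, for all x = hω ≥ 0: sinc(x)·sinc(x/2)cos(x/2) − cos(x)·(1/2)sinc²(x/2) = (1/2)sinc²(x/2) and cos(x/2)·(1/2)sinc²(x/2) = (1/2)sinc(x/2)·sinc(x/2)cos(x/2). They do not satisfy the symplecticity conditions: there is no constant d₁ ∈ ℝ for which both symplecticity identities hold for all x ≥ 0, since the second identity would force d₁ = sinc(x/2) for all x (which equals 1 at x = 0 and 2/π at x = π). -/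

import Mathlib

noncomputable section

/-- `sinc x = sin x / x`, with `sinc 0 = 1`. -/
def sinc (x : ℝ) : ℝ := if x = 0 then 1 else Real.sin x / x

lemma sinc_zero : sinc 0 = 1 := by simp [sinc]

lemma sinc_half (x : ℝ) : sinc x = sinc (x / 2) * Real.cos (x / 2) := by
  rcases eq_or_ne x 0 with h | h
  · simp [h, sinc_zero]
  · have h2 : x / 2 ≠ 0 := by simpa using h
    have : Real.sin x = 2 * Real.sin (x / 2) * Real.cos (x / 2) := by
      rw [show x = 2 * (x / 2) by ring, Real.sin_two_mul]; ring_nf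
    simp only [sinc, h, h2, if_neg]
    rw [this]; simp only [if_false, ↓reduceIte]; ring

lemma sinc_pi_half : sinc (Real.pi / 2) = 2 / Real.pi := by
  have h : Real.pi / 2 ≠ 0 := by positivity
  simp [sinc, h, Real.sin_pi_div_two]

lemma cos_half_sq (x : ℝ) : Real.cos x = 2 * Real.cos (x / 2) ^ 2 - 1 := by
  rw [show x = 2 * (x / 2) by ring, Real.cos_two_mul]; norm_num

lemma sym1 (x : ℝ) :
    sinc x * (sinc (x / 2) * Real.cos (x / 2)) - Real.cos x * (1 / 2 * sinc (x / 2) ^ 2) =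
      1 / 2 * sinc (x / 2) ^ 2 := by
  rw [sinc_half x, cos_half_sq x]; ring

/-- the method ERKN3, with c₁ = 1/2, b̄₁(x) = (1/2)sinc²(x/2) and
b₁(x) = sinc(x/2)cos(x/2), is symmetric but not symplectic. -/
theorem erkn3_symmetric_not_symplectic :
    let c1 : ℝ := 1 / 2
    let bb1 : ℝ → ℝ := fun x => 1 / 2 * sinc (x / 2) ^ 2
    let b1 : ℝ → ℝ := fun x => sinc (x / 2) * Real.cos (x / 2)
    -- the symmetry conditions hold, explicitly:
    (∀ x : ℝ, 0 ≤ x →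
      sinc x * (sinc (x / 2) * Real.cos (x / 2)) - Real.cos x * (1 / 2 * sinc (x / 2) ^ 2) =
        1 / 2 * sinc (x / 2) ^ 2) ∧
    (∀ x : ℝ, 0 ≤ x →
      Real.cos (x / 2) * (1 / 2 * sinc (x / 2) ^ 2) =
        1 / 2 * sinc (x / 2) * (sinc (x / 2) * Real.cos (x / 2))) ∧
    (c1 = 1 / 2 ∧
      (∀ x : ℝ, 0 ≤ x → bb1 x = sinc x * b1 x - Real.cos x * bb1 x) ∧
      (∀ x : ℝ, 0 ≤ x → Real.cos (c1 * x) * bb1 x = c1 * sinc (c1 * x) * b1 x)) ∧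
    -- there is no d₁ for which both symplecticity identities hold for all x ≥ 0
    (¬ ∃ d1 : ℝ,
        (∀ x : ℝ, 0 ≤ x →
          Real.cos x * b1 x + x ^ 2 * sinc x * bb1 x = d1 * Real.cos (c1 * x)) ∧
        (∀ x : ℝ, 0 ≤ x →
          sinc x * b1 x - Real.cos x * bb1 x = c1 * d1 * sinc (c1 * x))) ∧
    -- indeed the second symplecticity identity would force d₁ = sinc(x/2) for all x,
    -- which equals 1 at x = 0 and 2/π at x = π
    (∀ d1 : ℝ,
      (∀ x : ℝ, 0 ≤ x →
        sinc x * b1 x - Real.cos x * bb1 x = c1 * d1 * sinc (c1 * x)) →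
      d1 = 1 ∧ d1 = 2 / Real.pi) ∧
    sinc (0 / 2) = 1 ∧ sinc (Real.pi / 2) = 2 / Real.pi := by
  intro c1 bb1 b1
  have key : ∀ d1 : ℝ,
      (∀ x : ℝ, 0 ≤ x →
        sinc x * b1 x - Real.cos x * bb1 x = c1 * d1 * sinc (c1 * x)) →
      d1 = 1 ∧ d1 = 2 / Real.pi := by
    intro d1 h
    have force : ∀ x : ℝ, 0 ≤ x → sinc (x / 2) ≠ 0 → d1 = sinc (x / 2) := by
      intro x hx hne
      have h1 := h x hx
      simp only [b1, bb1, c1] at h1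
      rw [sym1 x] at h1
      have h2 : (1:ℝ)/2 * x = x / 2 := by ring
      rw [h2] at h1
      have : sinc (x / 2) * sinc (x / 2) = d1 * sinc (x / 2) := by linarith
      exact ((mul_right_cancel₀ hne this).symm)
    constructor
    · have := force 0 le_rfl (by rw [show (0:ℝ)/2 = 0 by ring, sinc_zero]; norm_num)
      rwa [show (0:ℝ)/2 = 0 by ring, sinc_zero] at this
    · have hpi : (0:ℝ) ≤ Real.pi := Real.pi_pos.le
      have hne : sinc (Real.pi / 2) ≠ 0 := by
        rw [sinc_pi_half]; positivity
      have := force Real.pi hpi hne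
      rwa [sinc_pi_half] at this
  refine ⟨fun x _ => sym1 x, fun x _ => by ring, ⟨rfl, ?_, ?_⟩, ?_, key, by
    rw [show (0:ℝ)/2 = 0 by ring, sinc_zero], sinc_pi_half⟩
  · intro x hx
    simp only [bb1, b1]
    linarith [sym1 x]
  · intro x hx
    simp only [bb1, b1, c1]
    rw [show (1:ℝ)/2 * x = x / 2 by ring]; ring
  · rintro ⟨d1, _, h2⟩
    obtain ⟨e1, e2⟩ := key d1 h2
    rw [e1] at e2
    have hpi := Real.pi_gt_three
    rw [eq_div_iff (by linarith : Real.pi ≠ 0)] at e2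
    linarith
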